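/- Fix z ∈ ℂ ∖ ℝ. For every k ≥ 0 one has ∫_ℝ p_k(x)/(x − z) dμ(x) = w(z) p_k(z) + r_k(z), and consequently (by Bessel's inequality) Σ_{k=0}^∞ |w(z) p_k(z) + r_k(z)|² ≤ ∫_ℝ |x − z|^{−2} dμ(x) < ∞. -/

import Mathlib

open MeasureTheory Polynomial

/-- The topological support of a Borel measure on `ℝ`. -/
def measSupport (μ : Measure ℝ) : Set ℝ := {x : ℝ | ∀ U ∈ nhds x, μ U ≠ 0}

lemma poly_integrable (μ : Measure ℝ) [IsProbabilityMeasure μ]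
    (hmom : ∀ m : ℕ, Integrable (fun x : ℝ => |x| ^ m) μ) (q : Polynomial ℝ) :
    Integrable (fun x : ℝ => q.eval x) μ := by
  have hx : ∀ i : ℕ, Integrable (fun x : ℝ => x ^ i) μ := by
    intro i
    refine (hmom i).mono' (continuous_pow i).aestronglyMeasurable ?_
    filter_upwards with x
    simp [abs_pow]
  have : (fun x : ℝ => q.eval x)
      = fun x => ∑ i ∈ Finset.range (q.natDegree + 1), q.coeff i * x ^ i := by
    funext x; exact q.eval_eq_sum_range x
  rw [this]
  exact integrable_finset_sum _ fun i _ => (hx i).const_mul _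

lemma sub_ne_zero_of_im (z : ℂ) (hz : z.im ≠ 0) (x : ℝ) : (x : ℂ) - z ≠ 0 := by
  intro h
  have : z = (x : ℂ) := by linear_combination -h
  rw [this] at hz
  simp at hz

lemma inv_sub_bound (z : ℂ) (hz : z.im ≠ 0) (x : ℝ) :
    ‖((x : ℂ) - z)⁻¹‖ ≤ |z.im|⁻¹ := by
  rw [norm_inv]
  apply inv_anti₀ (abs_pos.mpr hz)
  calc |z.im| = |((x : ℂ) - z).im| := by simp
    _ ≤ ‖(x : ℂ) - z‖ := Complex.abs_im_le_norm _

lemma inv_sub_meas (μ : Measure ℝ) (z : ℂ) (hz : z.im ≠ 0) :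
    AEStronglyMeasurable (fun x : ℝ => ((x : ℂ) - z)⁻¹) μ := by
  refine Continuous.aestronglyMeasurable (Continuous.inv₀ (by continuity) ?_)
  exact fun x => sub_ne_zero_of_im z hz x

lemma poly_div_integrable (μ : Measure ℝ) [IsProbabilityMeasure μ]
    (hmom : ∀ m : ℕ, Integrable (fun x : ℝ => |x| ^ m) μ) (z : ℂ) (hz : z.im ≠ 0)
    (q : Polynomial ℝ) :
    Integrable (fun x : ℝ => ((q.eval x : ℝ) : ℂ) / ((x : ℂ) - z)) μ := by
  have h1 : Integrable (fun x : ℝ => ((q.eval x : ℝ) : ℂ)) μ :=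
    (poly_integrable μ hmom q).ofReal
  have := h1.bdd_mul (inv_sub_meas μ z hz) (Filter.Eventually.of_forall (inv_sub_bound z hz))
  refine this.congr ?_
  filter_upwards with x
  rw [mul_comm, div_eq_mul_inv]

/-- Fix `z ∈ ℂ \ ℝ`.  For every `k`,
`∫ p_k(x)/(x − z) dμ(x) = w(z) p_k(z) + r_k(z)`, where `w` is the Stieltjes transform of `μ`,
and consequently (by Bessel's inequality)
`Σ_k |w(z) p_k(z) + r_k(z)|² ≤ ∫ |x − z|⁻² dμ(x) < ∞`. -/
theorem stieltjes_coefficients_bessel (μ : Measure ℝ) [IsProbabilityMeasure μ]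
    (hmom : ∀ m : ℕ, Integrable (fun x : ℝ => |x| ^ m) μ)
    (hsupp : (measSupport μ).Infinite)
    (p : ℕ → Polynomial ℝ)
    (hdeg : ∀ n, (p n).degree = n)
    (hlead : ∀ n, 0 < (p n).leadingCoeff)
    (horth : ∀ n m, ∫ x, (p n).eval x * (p m).eval x ∂μ = if n = m then 1 else 0)
    (a b : ℕ → ℝ) (hapos : ∀ k, 0 < a k)
    (hrec : ∀ k : ℕ, X * p (k + 1) =
      C (a (k + 1)) * p (k + 2) + C (b (k + 1)) * p (k + 1) + C (a k) * p k)
    (hrec0 : X * p 0 = C (a 0) * p 1 + C (b 0) * p 0)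
    (r : ℕ → Polynomial ℝ)
    (hr0 : r 0 = 0) (hr1 : r 1 = C (a 0)⁻¹)
    (hrrec : ∀ k : ℕ, X * r (k + 1) =
      C (a (k + 1)) * r (k + 2) + C (b (k + 1)) * r (k + 1) + C (a k) * r k)
    (z : ℂ) (hz : z.im ≠ 0)
    (w : ℂ) (hw : w = ∫ x : ℝ, ((x : ℂ) - z)⁻¹ ∂μ) :
    (∀ k : ℕ, ∫ x : ℝ, (((p k).eval x : ℝ) : ℂ) / ((x : ℂ) - z) ∂μ
        = w * Polynomial.aeval z (p k) + Polynomial.aeval z (r k)) ∧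
    Integrable (fun x : ℝ => ‖(x : ℂ) - z‖⁻¹ ^ 2) μ ∧
    Summable (fun k : ℕ => ‖w * Polynomial.aeval z (p k) + Polynomial.aeval z (r k)‖ ^ 2) ∧
    ∑' k : ℕ, ‖w * Polynomial.aeval z (p k) + Polynomial.aeval z (r k)‖ ^ 2
      ≤ ∫ x : ℝ, ‖(x : ℂ) - z‖⁻¹ ^ 2 ∂μ := by
  -- notation
  have hne : ∀ x : ℝ, (x : ℂ) - z ≠ 0 := sub_ne_zero_of_im z hz
  have hintdiv : ∀ q : Polynomial ℝ,
      Integrable (fun x : ℝ => ((q.eval x : ℝ) : ℂ) / ((x : ℂ) - z)) μ :=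
    poly_div_integrable μ hmom z hz
  have hintq : ∀ q : Polynomial ℝ, Integrable (fun x : ℝ => ((q.eval x : ℝ) : ℂ)) μ :=
    fun q => (poly_integrable μ hmom q).ofReal
  -- p 0 = 1
  have hp0 : p 0 = 1 := by
    have h0 : p 0 = C ((p 0).coeff 0) :=
      Polynomial.eq_C_of_degree_le_zero (by rw [hdeg 0]; exact le_rfl)
    set c := (p 0).coeff 0 with hc
    have hcpos : 0 < c := by
      have := hlead 0
      rwa [Polynomial.leadingCoeff, Polynomial.natDegree_eq_of_degree_eq_some (hdeg 0)] at this
    have h00 := horth 0 0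
    rw [if_pos rfl] at h00
    have : ∫ x, (p 0).eval x * (p 0).eval x ∂μ = c * c := by
      rw [h0]; simp
    rw [this] at h00
    have hc1 : c = 1 := by nlinarith
    rw [h0, hc1]; simp
  -- ∫ p_{k+1} dμ = 0
  have hint0 : ∀ k : ℕ, ∫ x, (p (k + 1)).eval x ∂μ = 0 := by
    intro k
    have := horth 0 (k + 1)
    rw [if_neg (by omega), hp0] at this
    simpa using this
  -- the splitting identity : ∫ (X*q)(x)/(x-z) = ∫ q + z * ∫ q/(x-z)
  have hsplit : ∀ q : Polynomial ℝ,
      (∫ x : ℝ, (((X * q : Polynomial ℝ).eval x : ℝ) : ℂ) / ((x : ℂ) - z) ∂μ)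
        = (∫ x : ℝ, ((q.eval x : ℝ) : ℂ) ∂μ)
          + z * ∫ x : ℝ, ((q.eval x : ℝ) : ℂ) / ((x : ℂ) - z) ∂μ := by
    intro q
    have hpt : ∀ x : ℝ, (((X * q : Polynomial ℝ).eval x : ℝ) : ℂ) / ((x : ℂ) - z)
        = ((q.eval x : ℝ) : ℂ) + z * (((q.eval x : ℝ) : ℂ) / ((x : ℂ) - z)) := by
      intro x
      rw [Polynomial.eval_mul, Polynomial.eval_X]
      have hx := hne x
      push_cast
      field_simp
      ring
    rw [show (fun x : ℝ => (((X * q : Polynomial ℝ).eval x : ℝ) : ℂ) / ((x : ℂ) - z))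
        = fun x : ℝ => ((q.eval x : ℝ) : ℂ) + z * (((q.eval x : ℝ) : ℂ) / ((x : ℂ) - z))
        from funext hpt]
    rw [integral_add (hintq q) ((hintdiv q).const_mul z), integral_const_mul]
  -- complex integral of real polynomial
  have hcoeint : ∀ q : Polynomial ℝ,
      (∫ x : ℝ, ((q.eval x : ℝ) : ℂ) ∂μ) = ((∫ x, q.eval x ∂μ : ℝ) : ℂ) :=
    fun q => integral_ofReal
  have hco : ∀ g : ℝ → ℝ, (∫ x : ℝ, ((g x : ℝ) : ℂ) ∂μ) = ((∫ x, g x ∂μ : ℝ) : ℂ) :=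
    fun g => integral_ofReal
  -- abbreviations
  set F : ℕ → ℂ := fun k => ∫ x : ℝ, (((p k).eval x : ℝ) : ℂ) / ((x : ℂ) - z) ∂μ with hF
  set G : ℕ → ℂ := fun k => w * Polynomial.aeval z (p k) + Polynomial.aeval z (r k) with hG
  -- part 1
  have key : ∀ k : ℕ, F k = G k := by
    have base0 : F 0 = G 0 := by
      simp only [hF, hG, hp0, hr0]
      simp [hw]
    have base1 : F 1 = G 1 := by
      -- from hrec0 : X * p 0 = C (a 0) * p 1 + C (b 0) * p 0
      have h1 := hsplit (p 0)
      rw [hrec0] at h1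
      have hexp : (fun x : ℝ =>
          (((C (a 0) * p 1 + C (b 0) * p 0 : Polynomial ℝ).eval x : ℝ) : ℂ) / ((x : ℂ) - z))
          = fun x : ℝ => (a 0 : ℂ) * ((((p 1).eval x : ℝ) : ℂ) / ((x : ℂ) - z))
              + (b 0 : ℂ) * ((((p 0).eval x : ℝ) : ℂ) / ((x : ℂ) - z)) := by
        funext x
        simp only [Polynomial.eval_add, Polynomial.eval_mul, Polynomial.eval_C]
        push_cast
        ring
      rw [hexp, integral_add ((hintdiv (p 1)).const_mul _) ((hintdiv (p 0)).const_mul _),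
        integral_const_mul, integral_const_mul] at h1
      -- h1 : a0 * F 1 + b0 * F 0 = ∫ p0 + z * F 0
      have hp0int : (∫ x : ℝ, (((p 0).eval x : ℝ) : ℂ) ∂μ) = 1 := by
        rw [hp0]; simp
      rw [hp0int] at h1
      -- aeval form of hrec0
      have h2 : z * Polynomial.aeval z (p 0)
          = (a 0 : ℂ) * Polynomial.aeval z (p 1) + (b 0 : ℂ) * Polynomial.aeval z (p 0) := by
        have := congrArg (Polynomial.aeval z) hrec0
        simpa using this
      have ha0 : (a 0 : ℂ) ≠ 0 := by exact_mod_cast (hapos 0).ne'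
      have hF0 : F 0 = G 0 := base0
      have hGp0 : (Polynomial.aeval z (p 0) : ℂ) = 1 := by rw [hp0]; simp
      have hGr1 : (Polynomial.aeval z (r 1) : ℂ) = (a 0 : ℂ)⁻¹ := by
        rw [hr1]; push_cast [Polynomial.aeval_C]; rfl
      apply mul_left_cancel₀ ha0
      have hG0 : G 0 = w := by simp [hG, hGp0, hr0]
      have hFG : (a 0 : ℂ) * F 1 = 1 + z * (G 0) - (b 0 : ℂ) * (G 0) := by
        rw [← hF0]; linear_combination h1
      rw [hFG, hG0]
      simp only [hG, hGr1]
      have h2' : (a 0 : ℂ) * Polynomial.aeval z (p 1) = z - (b 0 : ℂ) := by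
        rw [hGp0] at h2; linear_combination -h2
      have hinv : (a 0 : ℂ) * (a 0 : ℂ)⁻¹ = 1 := mul_inv_cancel₀ ha0
      linear_combination -w * h2' - hinv
    -- step
    have step : ∀ k : ℕ, F k = G k → F (k + 1) = G (k + 1) → F (k + 2) = G (k + 2) := by
      intro k ih0 ih1
      have h1 := hsplit (p (k + 1))
      rw [hrec k] at h1
      have hexp : (fun x : ℝ =>
          (((C (a (k+1)) * p (k+2) + C (b (k+1)) * p (k+1) + C (a k) * p k : Polynomial ℝ).eval x : ℝ) : ℂ) / ((x : ℂ) - z))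
          = fun x : ℝ => (a (k+1) : ℂ) * ((((p (k+2)).eval x : ℝ) : ℂ) / ((x : ℂ) - z))
              + (b (k+1) : ℂ) * ((((p (k+1)).eval x : ℝ) : ℂ) / ((x : ℂ) - z))
              + (a k : ℂ) * ((((p k).eval x : ℝ) : ℂ) / ((x : ℂ) - z)) := by
        funext x
        simp only [Polynomial.eval_add, Polynomial.eval_mul, Polynomial.eval_C]
        push_cast
        ring
      have i1 : Integrable (fun x : ℝ =>
          (a (k+1) : ℂ) * ((((p (k+2)).eval x : ℝ) : ℂ) / ((x : ℂ) - z))) μ :=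
        (hintdiv (p (k+2))).const_mul _
      have i2 : Integrable (fun x : ℝ =>
          (b (k+1) : ℂ) * ((((p (k+1)).eval x : ℝ) : ℂ) / ((x : ℂ) - z))) μ :=
        (hintdiv (p (k+1))).const_mul _
      have i3 : Integrable (fun x : ℝ =>
          (a k : ℂ) * ((((p k).eval x : ℝ) : ℂ) / ((x : ℂ) - z))) μ :=
        (hintdiv (p k)).const_mul _
      have i12 : Integrable (fun x : ℝ =>
          (a (k+1) : ℂ) * ((((p (k+2)).eval x : ℝ) : ℂ) / ((x : ℂ) - z))
          + (b (k+1) : ℂ) * ((((p (k+1)).eval x : ℝ) : ℂ) / ((x : ℂ) - z))) μ := i1.add i2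
      rw [hexp, integral_add i12 i3, integral_add i1 i2,
        integral_const_mul, integral_const_mul, integral_const_mul] at h1
      have hz0 : (∫ x : ℝ, (((p (k+1)).eval x : ℝ) : ℂ) ∂μ) = 0 := by
        rw [hcoeint, hint0 k]; simp
      rw [hz0] at h1
      -- h1 : a(k+1) F(k+2) + b(k+1) F(k+1) + a k * F k = 0 + z * F (k+1)
      have h2 : z * Polynomial.aeval z (p (k+1))
          = (a (k+1) : ℂ) * Polynomial.aeval z (p (k+2))
            + (b (k+1) : ℂ) * Polynomial.aeval z (p (k+1))
            + (a k : ℂ) * Polynomial.aeval z (p k) := by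
        have := congrArg (Polynomial.aeval z) (hrec k)
        simpa using this
      have h3 : z * Polynomial.aeval z (r (k+1))
          = (a (k+1) : ℂ) * Polynomial.aeval z (r (k+2))
            + (b (k+1) : ℂ) * Polynomial.aeval z (r (k+1))
            + (a k : ℂ) * Polynomial.aeval z (r k) := by
        have := congrArg (Polynomial.aeval z) (hrrec k)
        simpa using this
      have ha : (a (k+1) : ℂ) ≠ 0 := by exact_mod_cast (hapos (k+1)).ne'
      apply mul_left_cancel₀ ha
      have hGrel : (a (k+1) : ℂ) * G (k+2)
          = z * G (k+1) - (b (k+1) : ℂ) * G (k+1) - (a k : ℂ) * G k := by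
        simp only [hG]
        linear_combination -w * h2 - h3
      rw [hGrel, ← ih0, ← ih1]
      linear_combination h1
    intro k
    induction k using Nat.twoStepInduction with
    | zero => exact base0
    | one => exact base1
    | more n ih0 ih1 => exact step n ih0 ih1
  -- now the L² part
  have hfmeas := inv_sub_meas μ z hz
  have hfbd : ∀ x : ℝ, ‖((x : ℂ) - z)⁻¹‖ ≤ |z.im|⁻¹ := inv_sub_bound z hz
  have hfmem : MemLp (fun x : ℝ => ((x : ℂ) - z)⁻¹) 2 μ :=
    MemLp.of_bound hfmeas _ (Filter.Eventually.of_forall hfbd)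
  have hvmem : ∀ k : ℕ, MemLp (fun x : ℝ => (((p k).eval x : ℝ) : ℂ)) 2 μ := by
    intro k
    have hmeas : AEStronglyMeasurable (fun x : ℝ => (((p k).eval x : ℝ) : ℂ)) μ := by
      refine Continuous.aestronglyMeasurable ?_
      exact Complex.continuous_ofReal.comp (p k).continuous_aeval
    rw [memLp_two_iff_integrable_sq_norm hmeas]
    have : (fun x : ℝ => ‖(((p k).eval x : ℝ) : ℂ)‖ ^ 2)
        = fun x : ℝ => ((p k) * (p k)).eval x := by
      funext x
      rw [Polynomial.eval_mul]
      simp [Complex.norm_real, sq_abs, sq]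
    rw [this]
    exact poly_integrable μ hmom _
  set f : Lp ℂ 2 μ := hfmem.toLp _ with hf
  set v : ℕ → Lp ℂ 2 μ := fun k => (hvmem k).toLp _ with hv
  have hinner : ∀ g h : ℝ → ℂ, ∀ (hg : MemLp g 2 μ) (hh : MemLp h 2 μ),
      (inner ℂ (hg.toLp g) (hh.toLp h) : ℂ) = ∫ x, (starRingEnd ℂ) (g x) * h x ∂μ := by
    intro g h hg hh
    rw [L2.inner_def]
    apply integral_congr_ae
    filter_upwards [hg.coeFn_toLp, hh.coeFn_toLp] with x hgx hhx
    rw [hgx, hhx]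
    exact RCLike.inner_apply' _ _
  have hortho : Orthonormal ℂ v := by
    rw [orthonormal_iff_ite]
    intro i j
    rw [hinner _ _ (hvmem i) (hvmem j)]
    have : (fun x : ℝ => (starRingEnd ℂ) ((((p i).eval x : ℝ) : ℂ)) * (((p j).eval x : ℝ) : ℂ))
        = fun x : ℝ => (((p i).eval x * (p j).eval x : ℝ) : ℂ) := by
      funext x
      rw [Complex.conj_ofReal]
      push_cast
      ring
    rw [this, hco _, horth i j]
    split <;> simp
  have hinnerf : ∀ k : ℕ, (inner ℂ (v k) f : ℂ) = G k := by
    intro k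
    rw [hv, hf, hinner _ _ (hvmem k) hfmem]
    have : (fun x : ℝ => (starRingEnd ℂ) ((((p k).eval x : ℝ) : ℂ)) * ((x : ℂ) - z)⁻¹)
        = fun x : ℝ => (((p k).eval x : ℝ) : ℂ) / ((x : ℂ) - z) := by
      funext x
      rw [Complex.conj_ofReal, div_eq_mul_inv]
    rw [this]
    exact key k
  have hsq : Integrable (fun x : ℝ => ‖(x : ℂ) - z‖⁻¹ ^ 2) μ := by
    have : (fun x : ℝ => ‖(x : ℂ) - z‖⁻¹ ^ 2)
        = fun x : ℝ => ‖((x : ℂ) - z)⁻¹‖ ^ 2 := by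
      funext x; rw [norm_inv]
    rw [this]
    exact (memLp_two_iff_integrable_sq_norm hfmeas).mp hfmem
  have hnormf : ‖f‖ ^ 2 = ∫ x : ℝ, ‖(x : ℂ) - z‖⁻¹ ^ 2 ∂μ := by
    have h1 : (‖f‖ ^ 2 : ℝ) = RCLike.re (inner ℂ f f : ℂ) :=
      (inner_self_eq_norm_sq f).symm
    have h2 : (inner ℂ f f : ℂ) = ∫ x : ℝ, ((‖((x : ℂ) - z)⁻¹‖ ^ 2 : ℝ) : ℂ) ∂μ := by
      rw [hf, hinner _ _ hfmem hfmem]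
      apply integral_congr_ae
      filter_upwards with x
      rw [← Complex.normSq_eq_conj_mul_self, Complex.normSq_eq_norm_sq]
    rw [h1, h2, hco _]
    rw [RCLike.re_to_complex, Complex.ofReal_re]
    apply integral_congr_ae
    filter_upwards with x
    rw [norm_inv]
  refine ⟨key, hsq, ?_, ?_⟩
  · have := hortho.inner_products_summable (x := f)
    refine this.congr fun k => ?_
    rw [hinnerf k]
  · have hb := hortho.tsum_inner_products_le (x := f)
    calc ∑' k : ℕ, ‖G k‖ ^ 2 = ∑' k : ℕ, ‖(inner ℂ (v k) f : ℂ)‖ ^ 2 := by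
          congr 1; funext k; rw [hinnerf k]
      _ ≤ ‖f‖ ^ 2 := hb
      _ = ∫ x : ℝ, ‖(x : ℂ) - z‖⁻¹ ^ 2 ∂μ := hnormf
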